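/- Let A be a ring, J a nilpotent two-sided ideal of A, and G ⊆ A a subset generating A as a ring. If φ : A → A is a ring homomorphism such that φ(g) − g ∈ J² for every g ∈ G, then φ is surjective. -/

import Mathlib

/-- Additive subgroup generated by products of `k` elements of `J`. -/
private def jPow {A : Type*} [Ring A] (J : TwoSidedIdeal A) (k : ℕ) : AddSubgroup A :=
  AddSubgroup.closure {z | ∃ l : List A, (∀ x ∈ l, x ∈ J) ∧ l.length = k ∧ z = l.prod}

private lemma list_prod_mem_jPow {A : Type*} [Ring A] {J : TwoSidedIdeal A} {k : ℕ}
    {l : List A} (hl : ∀ x ∈ l, x ∈ J) (hlen : l.length = k) :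
    l.prod ∈ jPow J k :=
  AddSubgroup.subset_closure ⟨l, hl, hlen, rfl⟩

private lemma mem_jPow_one {A : Type*} [Ring A] {J : TwoSidedIdeal A} {w : A}
    (hw : w ∈ J) : w ∈ jPow J 1 := by
  have := list_prod_mem_jPow (J := J) (l := [w]) (k := 1) (by simpa) rfl
  simpa using this

private lemma jPow_mul {A : Type*} [Ring A] {J : TwoSidedIdeal A} {j k : ℕ} {x y : A}
    (hx : x ∈ jPow J j) (hy : y ∈ jPow J k) : x * y ∈ jPow J (j + k) := by
  induction hx using AddSubgroup.closure_induction with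
  | mem x hx =>
    induction hy using AddSubgroup.closure_induction with
    | mem y hy =>
      obtain ⟨l, hl, hlen, rfl⟩ := hx
      obtain ⟨m, hm, hmlen, rfl⟩ := hy
      rw [← List.prod_append]
      refine list_prod_mem_jPow ?_ (by simp [hlen, hmlen])
      intro z hz
      rcases List.mem_append.1 hz with h | h
      · exact hl z h
      · exact hm z h
    | zero => rw [mul_zero]; exact AddSubgroup.zero_mem _
    | add a b _ _ ha hb => rw [mul_add]; exact add_mem ha hb
    | neg a _ ha => rw [mul_neg]; exact neg_mem ha
  | zero => rw [zero_mul]; exact AddSubgroup.zero_mem _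
  | add a b _ _ ha hb => rw [add_mul]; exact add_mem ha hb
  | neg a _ ha => rw [neg_mul]; exact neg_mem ha

private lemma jPow_mul_left {A : Type*} [Ring A] {J : TwoSidedIdeal A} {k : ℕ} {x : A}
    (a : A) (hx : x ∈ jPow J (k + 1)) : a * x ∈ jPow J (k + 1) := by
  induction hx using AddSubgroup.closure_induction with
  | mem x hx =>
    obtain ⟨l, hl, hlen, rfl⟩ := hx
    cases l with
    | nil => simp at hlen
    | cons u t =>
      rw [List.prod_cons, ← mul_assoc, ← List.prod_cons]
      refine list_prod_mem_jPow ?_ (by simpa using hlen)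
      intro z hz
      rcases List.mem_cons.1 hz with h | h
      · subst h; exact J.mul_mem_left _ _ (hl u (by simp))
      · exact hl z (by simp [h])
  | zero => rw [mul_zero]; exact AddSubgroup.zero_mem _
  | add b c _ _ hb hc => rw [mul_add]; exact add_mem hb hc
  | neg b _ hb => rw [mul_neg]; exact neg_mem hb

private lemma jPow_mul_right {A : Type*} [Ring A] {J : TwoSidedIdeal A} {k : ℕ} {x : A}
    (a : A) (hx : x ∈ jPow J (k + 1)) : x * a ∈ jPow J (k + 1) := by
  induction hx using AddSubgroup.closure_induction with
  | mem x hx =>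
    obtain ⟨l, hl, hlen, rfl⟩ := hx
    have hne : l ≠ [] := by rintro rfl; simp at hlen
    have hdec : l.dropLast ++ [l.getLast hne] = l := List.dropLast_append_getLast hne
    rw [← hdec, List.prod_append, List.prod_singleton, mul_assoc, ← List.prod_singleton
      (x := l.getLast hne * a), ← List.prod_append]
    refine list_prod_mem_jPow ?_ ?_
    · intro z hz
      rcases List.mem_append.1 hz with h | h
      · exact hl z (by rw [← hdec]; exact List.mem_append.2 (Or.inl h))
      · rw [List.mem_singleton.1 h]
        exact J.mul_mem_right _ _ (hl _ (List.getLast_mem hne))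
    · have := congrArg List.length hdec
      simp only [List.length_append, List.length_dropLast, List.length_singleton, hlen] at this ⊢; omega
  | zero => rw [zero_mul]; exact AddSubgroup.zero_mem _
  | add b c _ _ hb hc => rw [add_mul]; exact add_mem hb hc
  | neg b _ hb => rw [neg_mul]; exact neg_mem hb

private lemma jPow_subset_J {A : Type*} [Ring A] {J : TwoSidedIdeal A} {k : ℕ} {x : A}
    (hx : x ∈ jPow J (k + 1)) : x ∈ J := by
  induction hx using AddSubgroup.closure_induction with
  | mem x hx =>
    obtain ⟨l, hl, hlen, rfl⟩ := hx
    cases l with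
    | nil => simp at hlen
    | cons u t =>
      rw [List.prod_cons]
      exact J.mul_mem_right _ _ (hl u (by simp))
  | zero => exact J.zero_mem
  | add b c _ _ hb hc => exact J.add_mem hb hc
  | neg b _ hb => exact J.neg_mem hb

private lemma jPow_eq_zero {A : Type*} [Ring A] {J : TwoSidedIdeal A} {n : ℕ}
    (hnil : ∀ f : Fin n → A, (∀ i, f i ∈ J) → (List.ofFn f).prod = 0)
    {k : ℕ} (hk : n ≤ k) {x : A} (hx : x ∈ jPow J k) : x = 0 := by
  induction hx using AddSubgroup.closure_induction with
  | mem x hx =>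
    obtain ⟨l, hl, hlen, rfl⟩ := hx
    have htake : (l.take n).length = n := by
      rw [List.length_take]; omega
    have hofn : List.ofFn (fun i : Fin n => (l.take n).get (Fin.cast htake.symm i)) = l.take n := by
      apply List.ext_getElem
      · simp [htake]
      · intro i h1 h2
        simp
    have h0 : (l.take n).prod = 0 := by
      rw [← hofn]
      apply hnil
      intro i
      have hmem : (l.take n).get (Fin.cast htake.symm i) ∈ l.take n := List.get_mem _ _
      exact hl _ (List.mem_of_mem_take hmem)
    calc l.prod = (l.take n ++ l.drop n).prod := by rw [List.take_append_drop]
    _ = (l.take n).prod * (l.drop n).prod := List.prod_append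
    _ = 0 := by rw [h0, zero_mul]
  | zero => rfl
  | add b c _ _ hb hc => rw [hb, hc, add_zero]
  | neg b _ hb => rw [hb, neg_zero]

theorem ringHom_surjective_of_generators_fixed_mod_radical_sq
    (A : Type*) [Ring A] (J : TwoSidedIdeal A)
    (hnil : ∃ n : ℕ, 0 < n ∧ ∀ f : Fin n → A, (∀ i, f i ∈ J) → (List.ofFn f).prod = 0)
    (G : Set A) (hG : Subring.closure G = ⊤)
    (φ : A →+* A)
    (hφ : ∀ g ∈ G, φ g - g ∈ AddSubgroup.closure {z : A | ∃ u ∈ J, ∃ v ∈ J, z = u * v}) :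
    Function.Surjective φ := by
  obtain ⟨n, hnpos, hnil⟩ := hnil
  -- Step 1 : φ x - x ∈ J² for all x
  have hsub : AddSubgroup.closure {z : A | ∃ u ∈ J, ∃ v ∈ J, z = u * v} ≤ jPow J 2 := by
    refine AddSubgroup.closure_le _ |>.2 ?_
    rintro z ⟨u, hu, v, hv, rfl⟩
    have := list_prod_mem_jPow (J := J) (l := [u, v]) (k := 2)
      (by intro x hx; rcases List.mem_cons.1 hx with h | h
          · subst h; exact hu
          · simp at h; subst h; exact hv) rfl
    simpa using this
  have hD : ∀ x : A, φ x - x ∈ jPow J 2 := by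
    intro x
    have hx : x ∈ Subring.closure G := by rw [hG]; trivial
    induction hx using Subring.closure_induction with
    | mem g hg => exact hsub (hφ g hg)
    | zero => simpa using (jPow J 2).zero_mem
    | one => simpa using (jPow J 2).zero_mem
    | add a b _ _ ha hb =>
      have : φ (a + b) - (a + b) = (φ a - a) + (φ b - b) := by rw [map_add]; noncomm_ring
      rw [this]; exact add_mem ha hb
    | neg a _ ha =>
      have : φ (-a) - (-a) = -(φ a - a) := by rw [map_neg]; noncomm_ring
      rw [this]; exact neg_mem ha
    | mul a b _ _ ha hb =>
      have : φ (a * b) - a * b = φ a * (φ b - b) + (φ a - a) * b := by rw [map_mul]; noncomm_ring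
      rw [this]
      exact add_mem (jPow_mul_left _ hb) (jPow_mul_right _ ha)
  -- Step 2 : δ raises jPow degree
  have hDk : ∀ k : ℕ, ∀ x ∈ jPow J (k + 1), φ x - x ∈ jPow J (k + 2) := by
    intro k
    induction k with
    | zero => intro x _; exact hD x
    | succ k ih =>
      intro x hx
      induction hx using AddSubgroup.closure_induction with
      | mem z hz =>
        obtain ⟨l, hl, hlen, rfl⟩ := hz
        cases l with
        | nil => simp at hlen
        | cons u t =>
          have hu : u ∈ J := hl u (by simp)
          have ht : ∀ x ∈ t, x ∈ J := fun x hx => hl x (by simp [hx])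
          have htlen : t.length = k + 1 := by simpa using hlen
          have hv : t.prod ∈ jPow J (k + 1) := list_prod_mem_jPow ht htlen
          rw [List.prod_cons]
          have key : φ (u * t.prod) - u * t.prod
              = φ u * (φ t.prod - t.prod) + (φ u - u) * t.prod := by rw [map_mul]; noncomm_ring
          rw [key]
          have hφu : φ u ∈ J := by
        -- φ u = (φ u - u) + u
            have h1 : φ u - u ∈ J := jPow_subset_J (k := 1) (hD u)
            have := J.add_mem h1 hu
            simpa using this
          have t1 : φ u * (φ t.prod - t.prod) ∈ jPow J (1 + (k + 2)) :=
            jPow_mul (mem_jPow_one hφu) (ih _ hv)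
          have t2 : (φ u - u) * t.prod ∈ jPow J (2 + (k + 1)) :=
            jPow_mul (hD u) hv
          refine add_mem ?_ ?_
          · have : (1 + (k + 2)) = k + 1 + 2 := by omega
            rwa [this] at t1
          · have : (2 + (k + 1)) = k + 1 + 2 := by omega
            rwa [this] at t2
      | zero => simpa using (jPow J (k + 1 + 2)).zero_mem
      | add a b _ _ ha hb =>
        have : φ (a + b) - (a + b) = (φ a - a) + (φ b - b) := by rw [map_add]; noncomm_ring
        rw [this]; exact add_mem ha hb
      | neg a _ ha =>
        have : φ (-a) - (-a) = -(φ a - a) := by rw [map_neg]; noncomm_ring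
        rw [this]; exact neg_mem ha
  -- Step 3 : downward induction
  have hstep : ∀ j k : ℕ, 1 ≤ k → n ≤ k + j → ∀ x ∈ jPow J k, ∃ b, φ b = x := by
    intro j
    induction j with
    | zero =>
      intro k _ hk x hx
      refine ⟨0, ?_⟩
      rw [map_zero, jPow_eq_zero hnil (by omega) hx]
    | succ j ih =>
      intro k hk1 hk x hx
      obtain ⟨k', rfl⟩ := Nat.exists_eq_add_of_le hk1
      have hδ : φ x - x ∈ jPow J (k' + 2) := hDk k' x (by rwa [add_comm] at hx)
      obtain ⟨c, hc⟩ := ih (k' + 2) (by omega) (by omega) _ hδ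
      exact ⟨x - c, by rw [map_sub, hc]; noncomm_ring⟩
  -- Conclusion
  intro a
  obtain ⟨c, hc⟩ := hstep n 2 (by omega) (by omega) _ (hD a)
  exact ⟨a - c, by rw [map_sub, hc]; noncomm_ring⟩
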